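/- Let η₁ > 0, η₅ > 0 and let g : [0,∞) → [0,∞) be measurable with ∫_0^∞ g(τ)² dτ < ∞. Then there exists a constant C > 0, depending only on η₁, η₅ and ∫_0^∞ g², such that for all t ≥ 0: ∫_0^t e^{−η₅ (t−τ)} (g(τ) + 1)^{3/2} e^{−(η₁/2) τ} dτ ≤ C ( e^{−(η₁/4) t} + e^{−(η₅/2) t} ). -/

import Mathlib

noncomputable section

open MeasureTheory Real

/-- Elementary bound: `∫₀ᵗ e^{-cτ} dτ ≤ 1/c` for `c > 0`, `t ≥ 0`. -/
lemma exp_interval_integral_le (c t : ℝ) (hc : 0 < c) (ht : 0 ≤ t) :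
    (∫ τ in (0:ℝ)..t, Real.exp (-c * τ)) ≤ 1 / c := by
  have hne : (-c) ≠ 0 := by linarith
  have h := intervalIntegral.integral_comp_mul_left (a := (0:ℝ)) (b := t) Real.exp hne
  rw [h, integral_exp]
  have hE : 0 < Real.exp (-c * t) := Real.exp_pos _
  have h1 : (-c)⁻¹ • (Real.exp (-c * t) - Real.exp (-c * 0)) = (1 - Real.exp (-c * t)) / c := by
    rw [smul_eq_mul, mul_zero, Real.exp_zero]
    field_simp
    ring
  rw [h1, div_le_div_iff₀ hc hc]
  nlinarith

/-- Pointwise bound used in the convolution estimate. -/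
lemma pointwise_bound {η₁ η₅ t τ x : ℝ} (hη₁ : 0 < η₁) (hη₅ : 0 < η₅)
    (hτ0 : 0 ≤ τ) (hτt : τ ≤ t) (hx : 0 ≤ x) :
    Real.exp (-η₅ * (t - τ)) * (x + 1) ^ ((3:ℝ)/2) * Real.exp (-(η₁/2) * τ)
      ≤ (2 * x ^ 2 + 2) *
        (Real.exp (-(η₅/2) * t) * Real.exp (-(η₁/2) * τ)
          + Real.exp (-(η₁/4) * t) * Real.exp (-η₅ * (t - τ))) := by
  have h1 : (x + 1) ^ ((3:ℝ)/2) ≤ 2 * x ^ 2 + 2 := by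
    calc (x + 1) ^ ((3:ℝ)/2) ≤ (x + 1) ^ (2:ℝ) :=
          Real.rpow_le_rpow_of_exponent_le (by linarith) (by norm_num)
      _ = (x + 1) ^ 2 := Real.rpow_two _
      _ ≤ 2 * x ^ 2 + 2 := by nlinarith [sq_nonneg (x - 1)]
  have h2 : Real.exp (-η₅ * (t - τ)) * Real.exp (-(η₁/2) * τ)
      ≤ Real.exp (-(η₅/2) * t) * Real.exp (-(η₁/2) * τ)
        + Real.exp (-(η₁/4) * t) * Real.exp (-η₅ * (t - τ)) := by
    rcases le_or_gt τ (t/2) with h | h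
    · have hle : -η₅ * (t - τ) ≤ -(η₅/2) * t := by nlinarith
      have := mul_le_mul_of_nonneg_right (Real.exp_le_exp.mpr hle)
        (Real.exp_pos (-(η₁/2) * τ)).le
      nlinarith [mul_pos (Real.exp_pos (-(η₁/4) * t)) (Real.exp_pos (-η₅ * (t - τ)))]
    · have hle : -(η₁/2) * τ ≤ -(η₁/4) * t := by nlinarith
      have := mul_le_mul_of_nonneg_left (Real.exp_le_exp.mpr hle)
        (Real.exp_pos (-η₅ * (t - τ))).le
      nlinarith [mul_pos (Real.exp_pos (-(η₅/2) * t)) (Real.exp_pos (-(η₁/2) * τ))]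
  calc Real.exp (-η₅ * (t - τ)) * (x + 1) ^ ((3:ℝ)/2) * Real.exp (-(η₁/2) * τ)
      = (x + 1) ^ ((3:ℝ)/2) * (Real.exp (-η₅ * (t - τ)) * Real.exp (-(η₁/2) * τ)) := by ring
    _ ≤ (2 * x ^ 2 + 2) *
        (Real.exp (-(η₅/2) * t) * Real.exp (-(η₁/2) * τ)
          + Real.exp (-(η₁/4) * t) * Real.exp (-η₅ * (t - τ))) := by
        apply mul_le_mul h1 h2 (by positivity)
        positivity

set_option maxHeartbeats 800000 in
/-- the convolution-type decay estimate used in the proof of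
Theorem 1.2.  If `η₁, η₅ > 0` and `g ≥ 0` is measurable and square-integrable on `(0,∞)`,
then there is `C > 0`, depending only on `η₁`, `η₅` and `∫₀^∞ g²`, such that for all `t ≥ 0`:
`∫₀ᵗ e^{-η₅(t-τ)} (g(τ)+1)^{3/2} e^{-(η₁/2)τ} dτ ≤ C (e^{-(η₁/4)t} + e^{-(η₅/2)t})`. -/
theorem convolution_decay_estimate
    (η₁ η₅ : ℝ) (hη₁ : 0 < η₁) (hη₅ : 0 < η₅)
    (g : ℝ → ℝ) (hg : Measurable g) (hgnn : ∀ τ, 0 ≤ g τ)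
    (hgsq : IntegrableOn (fun τ => g τ ^ 2) (Set.Ioi (0:ℝ))) :
    ∃ C > (0:ℝ), ∀ t ≥ (0:ℝ),
      (∫ τ in (0:ℝ)..t,
          Real.exp (-η₅ * (t - τ)) * (g τ + 1) ^ ((3:ℝ)/2) * Real.exp (-(η₁/2) * τ))
        ≤ C * (Real.exp (-(η₁/4) * t) + Real.exp (-(η₅/2) * t)) := by
  set G : ℝ := ∫ τ in Set.Ioi (0:ℝ), g τ ^ 2 with hGdef
  have hGnn : 0 ≤ G := setIntegral_nonneg measurableSet_Ioi fun x _ => sq_nonneg _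
  refine ⟨2 * G + 4 / η₁ + (2 * G + 2 / η₅) + 1, by positivity, ?_⟩
  intro t ht
  -- abbreviations
  set E₁ : ℝ := Real.exp (-(η₅/2) * t) with hE₁
  set E₂ : ℝ := Real.exp (-(η₁/4) * t) with hE₂
  have hE₁p : 0 < E₁ := Real.exp_pos _
  have hE₂p : 0 < E₂ := Real.exp_pos _
  -- integrability of g² on Ioc 0 t, and of constants
  have hg2 : IntegrableOn (fun τ => g τ ^ 2) (Set.Ioc 0 t) :=
    hgsq.mono_set Set.Ioc_subset_Ioi_self
  have hg2m : Measurable fun τ => g τ ^ 2 := hg.pow measurable_const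
  have hmeas32 : Measurable fun τ => (g τ + 1) ^ ((3:ℝ)/2) :=
    (Real.continuous_rpow_const (by norm_num : (0:ℝ) ≤ (3:ℝ)/2)).measurable.comp
      (hg.add measurable_const)
  -- the two weight functions
  have hw₁c : Continuous fun τ : ℝ => Real.exp (-(η₁/2) * τ) :=
    Real.continuous_exp.comp (continuous_const.mul continuous_id)
  have hw₂c : Continuous fun τ : ℝ => Real.exp (-η₅ * (t - τ)) :=
    Real.continuous_exp.comp (continuous_const.mul (continuous_const.sub continuous_id))
  -- bounds 0 ≤ w ≤ 1 on Ioc 0 t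
  have hw₁le : ∀ τ ∈ Set.Ioc (0:ℝ) t, Real.exp (-(η₁/2) * τ) ≤ 1 := fun τ hτ =>
    Real.exp_le_one_iff.mpr (by nlinarith [hτ.1.le])
  have hw₂le : ∀ τ ∈ Set.Ioc (0:ℝ) t, Real.exp (-η₅ * (t - τ)) ≤ 1 := fun τ hτ =>
    Real.exp_le_one_iff.mpr (by nlinarith [hτ.2])
  -- integrability of the dominating function h
  have hdom : IntegrableOn
      (fun τ => (2 * g τ ^ 2 + 2) *
        (E₁ * Real.exp (-(η₁/2) * τ) + E₂ * Real.exp (-η₅ * (t - τ)))) (Set.Ioc 0 t) := by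
    have hbase : IntegrableOn (fun τ => 2 * g τ ^ 2 + 2) (Set.Ioc 0 t) :=
      (hg2.const_mul 2).add (integrableOn_const measure_Ioc_lt_top.ne)
    refine Integrable.mono' (hbase.const_mul (E₁ + E₂)) ?_ ?_
    · exact (((hg2m.const_mul 2).add measurable_const).mul
        ((hw₁c.measurable.const_mul E₁).add
          (hw₂c.measurable.const_mul E₂))).aestronglyMeasurable
    · filter_upwards [ae_restrict_mem measurableSet_Ioc] with τ hτ
      have h1 := hw₁le τ hτ
      have h2 := hw₂le τ hτ
      have e1 := (Real.exp_pos (-(η₁/2) * τ)).le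
      have e2 := (Real.exp_pos (-η₅ * (t - τ))).le
      rw [Real.norm_eq_abs, abs_of_nonneg (by positivity)]
      have hw : E₁ * Real.exp (-(η₁/2) * τ) + E₂ * Real.exp (-η₅ * (t - τ)) ≤ E₁ + E₂ := by
        nlinarith [mul_le_mul_of_nonneg_left h1 hE₁p.le, mul_le_mul_of_nonneg_left h2 hE₂p.le]
      have hgpos : (0:ℝ) ≤ 2 * g τ ^ 2 + 2 := by positivity
      calc (2 * g τ ^ 2 + 2) * (E₁ * Real.exp (-(η₁/2) * τ) + E₂ * Real.exp (-η₅ * (t - τ)))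
          ≤ (2 * g τ ^ 2 + 2) * (E₁ + E₂) := mul_le_mul_of_nonneg_left hw hgpos
        _ = (E₁ + E₂) * (2 * g τ ^ 2 + 2) := by ring
  -- integrability of the LHS integrand
  have hlhs : IntegrableOn
      (fun τ => Real.exp (-η₅ * (t - τ)) * (g τ + 1) ^ ((3:ℝ)/2) * Real.exp (-(η₁/2) * τ))
      (Set.Ioc 0 t) := by
    have hbase : IntegrableOn (fun τ => 2 * g τ ^ 2 + 2) (Set.Ioc 0 t) :=
      (hg2.const_mul 2).add (integrableOn_const measure_Ioc_lt_top.ne)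
    refine Integrable.mono' hbase ?_ ?_
    · exact ((hw₂c.measurable.mul hmeas32).mul hw₁c.measurable).aestronglyMeasurable
    · filter_upwards [ae_restrict_mem measurableSet_Ioc] with τ hτ
      have h1 := hw₁le τ hτ
      have h2 := hw₂le τ hτ
      have e1 := (Real.exp_pos (-(η₁/2) * τ)).le
      have e2 := (Real.exp_pos (-η₅ * (t - τ))).le
      have hgτ := hgnn τ
      have h32 : (g τ + 1) ^ ((3:ℝ)/2) ≤ 2 * g τ ^ 2 + 2 := by
        calc (g τ + 1) ^ ((3:ℝ)/2) ≤ (g τ + 1) ^ (2:ℝ) :=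
              Real.rpow_le_rpow_of_exponent_le (by linarith) (by norm_num)
          _ = (g τ + 1) ^ 2 := Real.rpow_two _
          _ ≤ 2 * g τ ^ 2 + 2 := by nlinarith [sq_nonneg (g τ - 1)]
      have h32nn : 0 ≤ (g τ + 1) ^ ((3:ℝ)/2) := Real.rpow_nonneg (by linarith) _
      rw [Real.norm_eq_abs, abs_of_nonneg (by positivity)]
      calc Real.exp (-η₅ * (t - τ)) * (g τ + 1) ^ ((3:ℝ)/2) * Real.exp (-(η₁/2) * τ)
          ≤ Real.exp (-η₅ * (t - τ)) * (g τ + 1) ^ ((3:ℝ)/2) :=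
            mul_le_of_le_one_right (mul_nonneg e2 h32nn) h1
        _ ≤ (g τ + 1) ^ ((3:ℝ)/2) := mul_le_of_le_one_left h32nn h2
        _ ≤ 2 * g τ ^ 2 + 2 := h32
  have hII : IntervalIntegrable
      (fun τ => Real.exp (-η₅ * (t - τ)) * (g τ + 1) ^ ((3:ℝ)/2) * Real.exp (-(η₁/2) * τ))
      volume 0 t := (intervalIntegrable_iff_integrableOn_Ioc_of_le ht).mpr hlhs
  have hIIdom : IntervalIntegrable
      (fun τ => (2 * g τ ^ 2 + 2) *
        (E₁ * Real.exp (-(η₁/2) * τ) + E₂ * Real.exp (-η₅ * (t - τ)))) volume 0 t :=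
    (intervalIntegrable_iff_integrableOn_Ioc_of_le ht).mpr hdom
  -- step 1 : pointwise domination
  have step1 :
      (∫ τ in (0:ℝ)..t,
          Real.exp (-η₅ * (t - τ)) * (g τ + 1) ^ ((3:ℝ)/2) * Real.exp (-(η₁/2) * τ))
        ≤ ∫ τ in (0:ℝ)..t, (2 * g τ ^ 2 + 2) *
            (E₁ * Real.exp (-(η₁/2) * τ) + E₂ * Real.exp (-η₅ * (t - τ))) := by
    refine intervalIntegral.integral_mono_on ht hII hIIdom fun τ hτ => ?_
    have := pointwise_bound (η₁ := η₁) (η₅ := η₅) (t := t) (τ := τ) (x := g τ)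
      hη₁ hη₅ hτ.1 hτ.2 (hgnn τ)
    rw [hE₁, hE₂]
    linarith [this]
  -- sub-integrability pieces
  have hint_gw₁ : IntervalIntegrable (fun τ => 2 * g τ ^ 2 * Real.exp (-(η₁/2) * τ)
      + 2 * Real.exp (-(η₁/2) * τ)) volume 0 t := by
    refine (intervalIntegrable_iff_integrableOn_Ioc_of_le ht).mpr ?_
    refine Integrable.add ?_ ((hw₁c.integrableOn_Icc.mono_set Set.Ioc_subset_Icc_self).const_mul 2)
    refine Integrable.mono' (hg2.const_mul 2) ?_ ?_
    · exact ((hg2m.const_mul 2).mul hw₁c.measurable).aestronglyMeasurable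
    · filter_upwards [ae_restrict_mem measurableSet_Ioc] with τ hτ
      have h1 := hw₁le τ hτ
      have e1 := (Real.exp_pos (-(η₁/2) * τ)).le
      rw [Real.norm_eq_abs, abs_of_nonneg (by positivity)]
      nlinarith [sq_nonneg (g τ)]
  have hint_gw₂ : IntervalIntegrable (fun τ => 2 * g τ ^ 2 * Real.exp (-η₅ * (t - τ))
      + 2 * Real.exp (-η₅ * (t - τ))) volume 0 t := by
    refine (intervalIntegrable_iff_integrableOn_Ioc_of_le ht).mpr ?_
    refine Integrable.add ?_ ((hw₂c.integrableOn_Icc.mono_set Set.Ioc_subset_Icc_self).const_mul 2)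
    refine Integrable.mono' (hg2.const_mul 2) ?_ ?_
    · exact ((hg2m.const_mul 2).mul hw₂c.measurable).aestronglyMeasurable
    · filter_upwards [ae_restrict_mem measurableSet_Ioc] with τ hτ
      have h2 := hw₂le τ hτ
      have e2 := (Real.exp_pos (-η₅ * (t - τ))).le
      rw [Real.norm_eq_abs, abs_of_nonneg (by positivity)]
      nlinarith [sq_nonneg (g τ)]
  have hint1 : IntervalIntegrable
      (fun τ => (2 * g τ ^ 2 + 2) * Real.exp (-(η₁/2) * τ)) volume 0 t := by
    have : (fun τ => (2 * g τ ^ 2 + 2) * Real.exp (-(η₁/2) * τ))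
        = fun τ => 2 * g τ ^ 2 * Real.exp (-(η₁/2) * τ) + 2 * Real.exp (-(η₁/2) * τ) := by
      funext τ; ring
    rw [this]; exact hint_gw₁
  have hint2 : IntervalIntegrable
      (fun τ => (2 * g τ ^ 2 + 2) * Real.exp (-η₅ * (t - τ))) volume 0 t := by
    have : (fun τ => (2 * g τ ^ 2 + 2) * Real.exp (-η₅ * (t - τ)))
        = fun τ => 2 * g τ ^ 2 * Real.exp (-η₅ * (t - τ)) + 2 * Real.exp (-η₅ * (t - τ)) := by
      funext τ; ring
    rw [this]; exact hint_gw₂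
  -- step 2 : split the dominating integral
  have step2 :
      (∫ τ in (0:ℝ)..t, (2 * g τ ^ 2 + 2) *
          (E₁ * Real.exp (-(η₁/2) * τ) + E₂ * Real.exp (-η₅ * (t - τ))))
        = E₁ * (∫ τ in (0:ℝ)..t, (2 * g τ ^ 2 + 2) * Real.exp (-(η₁/2) * τ))
          + E₂ * (∫ τ in (0:ℝ)..t, (2 * g τ ^ 2 + 2) * Real.exp (-η₅ * (t - τ))) := by
    rw [show (fun τ => (2 * g τ ^ 2 + 2) *
          (E₁ * Real.exp (-(η₁/2) * τ) + E₂ * Real.exp (-η₅ * (t - τ))))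
        = fun τ => E₁ * ((2 * g τ ^ 2 + 2) * Real.exp (-(η₁/2) * τ))
          + E₂ * ((2 * g τ ^ 2 + 2) * Real.exp (-η₅ * (t - τ))) from funext fun τ => by ring]
    rw [intervalIntegral.integral_add (hint1.const_mul E₁) (hint2.const_mul E₂),
      intervalIntegral.integral_const_mul, intervalIntegral.integral_const_mul]
  -- bound on ∫ g² over (0,t]
  have hgsq_bound : (∫ τ in (0:ℝ)..t, g τ ^ 2) ≤ G := by
    rw [intervalIntegral.integral_of_le ht]
    refine setIntegral_mono_set hgsq ?_ (HasSubset.Subset.eventuallyLE Set.Ioc_subset_Ioi_self)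
    filter_upwards with τ using sq_nonneg _
  have hgsq_II : IntervalIntegrable (fun τ => g τ ^ 2) volume 0 t :=
    (intervalIntegrable_iff_integrableOn_Ioc_of_le ht).mpr hg2
  -- bound J₁ = ∫ (2g²+2) w₁ ≤ 2G + 4/η₁
  have hw₁int : (∫ τ in (0:ℝ)..t, Real.exp (-(η₁/2) * τ)) ≤ 2 / η₁ := by
    have h := exp_interval_integral_le (η₁/2) t (by linarith) ht
    have h2 : 1 / (η₁/2) = 2 / η₁ := by field_simp
    linarith
  have hw₁II : IntervalIntegrable (fun τ => Real.exp (-(η₁/2) * τ)) volume 0 t :=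
    hw₁c.intervalIntegrable 0 t
  have hw₂II : IntervalIntegrable (fun τ => Real.exp (-η₅ * (t - τ))) volume 0 t :=
    hw₂c.intervalIntegrable 0 t
  have hJ₁ : (∫ τ in (0:ℝ)..t, (2 * g τ ^ 2 + 2) * Real.exp (-(η₁/2) * τ))
      ≤ 2 * G + 4 / η₁ := by
    have hmono : (∫ τ in (0:ℝ)..t, (2 * g τ ^ 2 + 2) * Real.exp (-(η₁/2) * τ))
        ≤ ∫ τ in (0:ℝ)..t, (2 * g τ ^ 2 + 2 * Real.exp (-(η₁/2) * τ)) := by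
      refine intervalIntegral.integral_mono_on ht hint1
        ((hgsq_II.const_mul 2).add (hw₁II.const_mul 2)) fun τ hτ => ?_
      have h1 : Real.exp (-(η₁/2) * τ) ≤ 1 := Real.exp_le_one_iff.mpr (by nlinarith [hτ.1])
      have e1 := (Real.exp_pos (-(η₁/2) * τ)).le
      nlinarith [mul_nonneg (sub_nonneg.mpr h1) (sq_nonneg (g τ))]
    have hsplit : (∫ τ in (0:ℝ)..t, (2 * g τ ^ 2 + 2 * Real.exp (-(η₁/2) * τ)))
        = 2 * (∫ τ in (0:ℝ)..t, g τ ^ 2) + 2 * ∫ τ in (0:ℝ)..t, Real.exp (-(η₁/2) * τ) := by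
      rw [intervalIntegral.integral_add (hgsq_II.const_mul 2) (hw₁II.const_mul 2),
        intervalIntegral.integral_const_mul, intervalIntegral.integral_const_mul]
    have hr : 2 * (2 / η₁) = 4 / η₁ := by ring
    linarith [hmono, hsplit.le, hsplit.ge, hgsq_bound, hw₁int]
  have hw₂int : (∫ τ in (0:ℝ)..t, Real.exp (-η₅ * (t - τ))) ≤ 1 / η₅ := by
    have hcomp := intervalIntegral.integral_comp_sub_left (a := (0:ℝ)) (b := t)
      (fun s => Real.exp (-η₅ * s)) t
    simp only [sub_self, sub_zero] at hcomp
    rw [hcomp]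
    exact exp_interval_integral_le η₅ t hη₅ ht
  have hJ₂ : (∫ τ in (0:ℝ)..t, (2 * g τ ^ 2 + 2) * Real.exp (-η₅ * (t - τ)))
      ≤ 2 * G + 2 / η₅ := by
    have hmono : (∫ τ in (0:ℝ)..t, (2 * g τ ^ 2 + 2) * Real.exp (-η₅ * (t - τ)))
        ≤ ∫ τ in (0:ℝ)..t, (2 * g τ ^ 2 + 2 * Real.exp (-η₅ * (t - τ))) := by
      refine intervalIntegral.integral_mono_on ht hint2
        ((hgsq_II.const_mul 2).add (hw₂II.const_mul 2)) fun τ hτ => ?_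
      have h2 : Real.exp (-η₅ * (t - τ)) ≤ 1 := Real.exp_le_one_iff.mpr (by nlinarith [hτ.2])
      have e2 := (Real.exp_pos (-η₅ * (t - τ))).le
      nlinarith [mul_nonneg (sub_nonneg.mpr h2) (sq_nonneg (g τ))]
    have hsplit : (∫ τ in (0:ℝ)..t, (2 * g τ ^ 2 + 2 * Real.exp (-η₅ * (t - τ))))
        = 2 * (∫ τ in (0:ℝ)..t, g τ ^ 2) + 2 * ∫ τ in (0:ℝ)..t, Real.exp (-η₅ * (t - τ)) := by
      rw [intervalIntegral.integral_add (hgsq_II.const_mul 2) (hw₂II.const_mul 2),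
        intervalIntegral.integral_const_mul, intervalIntegral.integral_const_mul]
    have hr : 2 * (1 / η₅) = 2 / η₅ := by ring
    linarith [hmono, hsplit.le, hsplit.ge, hgsq_bound, hw₂int]
  have final : E₁ * (∫ τ in (0:ℝ)..t, (2 * g τ ^ 2 + 2) * Real.exp (-(η₁/2) * τ))
      + E₂ * (∫ τ in (0:ℝ)..t, (2 * g τ ^ 2 + 2) * Real.exp (-η₅ * (t - τ)))
      ≤ (2 * G + 4 / η₁ + (2 * G + 2 / η₅) + 1) * (E₂ + E₁) := by
    have b1 := mul_le_mul_of_nonneg_left hJ₁ hE₁p.le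
    have b2 := mul_le_mul_of_nonneg_left hJ₂ hE₂p.le
    nlinarith [hE₁p, hE₂p, hGnn, div_pos (by norm_num : (0:ℝ) < 4) hη₁,
      div_pos (by norm_num : (0:ℝ) < 2) hη₅]
  linarith [step1, final, step2.le, step2.ge]
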